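/- Suppose 1/n ≪ μ ≪ ε ≪ d and μ ≪ 1/r. Let V₁,…,V_r be disjoint vertex sets with total size n and n/(2r) ≤ |V_i| ≤ 2n/r for all i, and let X₁,…,X_r be disjoint vertex sets with |X_i| ≤ εn/r. Let G be a bipartite graph with parts X = ∪X_i and V = ∪V_i in which every edge joins X_i and V_i for some i, and with d_G(x) ≥ dn/r for all x ∈ X. Then for any μn-bounded system of conflicts on E(G), there exists a conflict-free matching in G covering X. -/

import Mathlib

open Finset

section LLLsec

variable {ι : Type} [Fintype ι] [DecidableEq ι]
  {D : ι → Type} [∀ a, Fintype (D a)] [∀ a, DecidableEq (D a)]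

private def good (S : Finset ((Σ a, D a) × (Σ a, D a))) : Finset (∀ a, D a) :=
  univ.filter fun σ => ∀ p ∈ S, ¬(σ p.1.1 = p.1.2 ∧ σ p.2.1 = p.2.2)

private lemma mem_good {S : Finset ((Σ a, D a) × (Σ a, D a))} {σ : ∀ a, D a} :
    σ ∈ good S ↔ ∀ p ∈ S, ¬(σ p.1.1 = p.1.2 ∧ σ p.2.1 = p.2.2) := by
  simp [good]

private lemma good_anti {S T : Finset ((Σ a, D a) × (Σ a, D a))} (h : S ⊆ T) :
    good T ⊆ good S := fun σ hσ => mem_good.2 fun p hp => mem_good.1 hσ p (h hp)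

private lemma card_sigma_fiber (c : ι) :
    ((univ : Finset (Σ a, D a)).filter fun e => e.1 = c).card = Fintype.card (D c) := by
  rw [← Finset.card_univ]
  symm
  apply Finset.card_bij (fun (u : D c) _ => (⟨c, u⟩ : Σ a, D a))
  · intro u _; simp
  · intro u _ u' _ h
    exact eq_of_heq (Sigma.mk.inj_iff.1 h).2
  · rintro ⟨a, u⟩ he
    have ha : a = c := by simpa using (Finset.mem_filter.1 he).2
    subst ha
    exact ⟨u, Finset.mem_univ _, rfl⟩

private lemma pin (a b : ι) (hab : a ≠ b) (u : D a) (v : D b)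
    (S : Finset ((Σ a, D a) × (Σ a, D a)))
    (hS : ∀ q ∈ S, q.1.1 ≠ a ∧ q.1.1 ≠ b ∧ q.2.1 ≠ a ∧ q.2.1 ≠ b) :
    ((good S).filter fun σ => σ a = u ∧ σ b = v).card
      * (Fintype.card (D a) * Fintype.card (D b)) = (good S).card := by
  have hupd : ∀ (σ : ∀ a, D a), σ ∈ good S → ∀ (u' : D a) (v' : D b),
      Function.update (Function.update σ a u') b v' ∈ good S := by
    intro σ hσ u' v'
    rw [mem_good] at hσ ⊢
    intro q hq
    obtain ⟨h1, h2, h3, h4⟩ := hS q hq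
    have e1 : Function.update (Function.update σ a u') b v' q.1.1 = σ q.1.1 := by
      rw [Function.update_of_ne h2, Function.update_of_ne h1]
    have e2 : Function.update (Function.update σ a u') b v' q.2.1 = σ q.2.1 := by
      rw [Function.update_of_ne h4, Function.update_of_ne h3]
    rw [e1, e2]
    exact hσ q hq
  have hvala : ∀ (σ : ∀ a, D a) (u' : D a) (v' : D b),
      Function.update (Function.update σ a u') b v' a = u' := by
    intro σ u' v'
    rw [Function.update_of_ne hab, Function.update_self]
  have hvalb : ∀ (σ : ∀ a, D a) (u' : D a) (v' : D b),
      Function.update (Function.update σ a u') b v' b = v' := by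
    intro σ u' v'
    rw [Function.update_self]
  have hback : ∀ (σ : ∀ a, D a) (u₁ u₂ : D a) (v₁ v₂ : D b), σ a = u₂ → σ b = v₂ →
      Function.update (Function.update (Function.update (Function.update σ a u₁) b v₁) a u₂) b v₂
        = σ := by
    intro σ u₁ u₂ v₁ v₂ ha hb
    funext c
    rcases eq_or_ne c b with rfl | hcb
    · rw [Function.update_self, hb]
    · rw [Function.update_of_ne hcb]
      rcases eq_or_ne c a with rfl | hca
      · rw [Function.update_self, ha]
      · rw [Function.update_of_ne hca, Function.update_of_ne hcb, Function.update_of_ne hca]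
  have hconst : ∀ (u' : D a) (v' : D b),
      ((good S).filter fun σ => σ a = u' ∧ σ b = v').card
        = ((good S).filter fun σ => σ a = u ∧ σ b = v).card := by
    intro u' v'
    apply Finset.card_bij' (fun σ _ => Function.update (Function.update σ a u) b v)
      (fun σ _ => Function.update (Function.update σ a u') b v')
    · intro σ hσ
      obtain ⟨hg, -, -⟩ : σ ∈ good S ∧ σ a = u' ∧ σ b = v' := by
        simpa using Finset.mem_filter.1 hσ
      exact Finset.mem_filter.2 ⟨hupd σ hg u v, hvala σ u v, hvalb σ u v⟩
    · intro τ hτ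
      obtain ⟨hg, -, -⟩ : τ ∈ good S ∧ τ a = u ∧ τ b = v := by
        simpa using Finset.mem_filter.1 hτ
      exact Finset.mem_filter.2 ⟨hupd τ hg u' v', hvala τ u' v', hvalb τ u' v'⟩
    · intro σ hσ
      obtain ⟨-, hu', hv'⟩ : σ ∈ good S ∧ σ a = u' ∧ σ b = v' := by
        simpa using Finset.mem_filter.1 hσ
      exact hback σ u u' v v' hu' hv'
    · intro τ hτ
      obtain ⟨-, hu, hv⟩ : τ ∈ good S ∧ τ a = u ∧ τ b = v := by
        simpa using Finset.mem_filter.1 hτ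
      exact hback τ u' u v' v hu hv
  have hsum := Finset.card_eq_sum_card_fiberwise
      (f := fun σ : ∀ a, D a => (σ a, σ b)) (s := good S) (t := (univ : Finset (D a × D b)))
      (fun σ _ => Finset.mem_univ _)
  have hfib : ∀ x : D a × D b,
      ((good S).filter fun σ => (σ a, σ b) = x).card
        = ((good S).filter fun σ => σ a = u ∧ σ b = v).card := by
    intro x
    have hcongr : (good S).filter (fun σ => (σ a, σ b) = x)
        = (good S).filter fun σ => σ a = x.1 ∧ σ b = x.2 := by
      apply Finset.filter_congr
      intro σ _
      cases x
      simp [Prod.ext_iff]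
    rw [hcongr]
    exact hconst x.1 x.2
  rw [hsum, Finset.sum_congr rfl fun x _ => hfib x, Finset.sum_const, Finset.card_univ,
    Fintype.card_prod, smul_eq_mul, mul_comm]

set_option maxHeartbeats 1000000 in
private theorem LLL
    (Bad : (Σ a, D a) → (Σ a, D a) → Prop) [∀ e f, Decidable (Bad e f)]
    (hsymm : ∀ e f, Bad e f → Bad f e)
    (m M k : ℝ)
    (hm : ∀ a, m ≤ (Fintype.card (D a) : ℝ))
    (hMc : ∀ a, (Fintype.card (D a) : ℝ) ≤ M)
    (hk : ∀ e : Σ a, D a,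
      (((univ : Finset (Σ a, D a)).filter fun f => Bad e f).card : ℝ) ≤ k)
    (hmk : 16 * M * k ≤ m ^ 2) (hm0 : 0 < m) :
    ∃ σ : ∀ a, D a, ∀ a a', a ≠ a' → ¬Bad ⟨a, σ a⟩ ⟨a', σ a'⟩ := by
  have hne : ∀ a, Nonempty (D a) := by
    intro a
    rw [← Fintype.card_pos_iff]
    exact_mod_cast lt_of_lt_of_le hm0 (hm a)
  set P : Finset ((Σ a, D a) × (Σ a, D a)) :=
    univ.filter fun q => q.1.1 ≠ q.2.1 ∧ Bad q.1 q.2 with hPdef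
  by_cases hPe : P = ∅
  · refine ⟨fun a => (hne a).some, ?_⟩
    intro a a' haa hB
    have hmem : ((⟨a, (hne a).some⟩ : Σ a, D a), (⟨a', (hne a').some⟩ : Σ a, D a)) ∈ P := by
      rw [hPdef]
      exact Finset.mem_filter.2 ⟨Finset.mem_univ _, haa, hB⟩
    rw [hPe] at hmem
    exact absurd hmem (Finset.notMem_empty _)
  · obtain ⟨p0, hp0⟩ := Finset.nonempty_of_ne_empty hPe
    have hp0' := Finset.mem_filter.1 hp0
    have hk1 : (1 : ℝ) ≤ k := by
      refine le_trans ?_ (hk p0.1)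
      have hmem : p0.2 ∈ (univ : Finset (Σ a, D a)).filter (fun f => Bad p0.1 f) :=
        Finset.mem_filter.2 ⟨Finset.mem_univ _, hp0'.2.2⟩
      have hpos := Finset.card_pos.2 ⟨p0.2, hmem⟩
      exact_mod_cast hpos
    have hk0 : (0:ℝ) ≤ k := le_trans zero_le_one hk1
    have hMm : m ≤ M := le_trans (hm p0.1.1) (hMc p0.1.1)
    have hm16 : 16 ≤ m := by nlinarith
    have hm2 : (0:ℝ) < m ^ 2 := by positivity
    set x : ℝ := 2 / m ^ 2 with hxdef
    have hx0 : 0 < x := by positivity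
    have hx1 : x ≤ 1/2 := by
      rw [hxdef, div_le_iff₀ hm2]
      nlinarith
    have h1x : 0 < 1 - x := by linarith
    -- counting lemmas
    have cnt_left : ∀ c : ι,
        (((univ : Finset ((Σ a, D a) × (Σ a, D a))).filter
          fun q => Bad q.1 q.2 ∧ q.1.1 = c).card : ℝ)
          ≤ (Fintype.card (D c) : ℝ) * k := by
      intro c
      have hfw := Finset.card_eq_sum_card_fiberwise
        (f := fun q : (Σ a, D a) × (Σ a, D a) => q.1)
        (s := (univ.filter fun q : (Σ a, D a) × (Σ a, D a) => Bad q.1 q.2 ∧ q.1.1 = c))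
        (t := (univ : Finset (Σ a, D a))) (fun q _ => Finset.mem_univ _)
      have hterm : ∀ e : Σ a, D a,
          ((((univ : Finset ((Σ a, D a) × (Σ a, D a))).filter
            fun q => Bad q.1 q.2 ∧ q.1.1 = c).filter
            fun q => q.1 = e).card : ℝ) ≤ if e.1 = c then k else 0 := by
        intro e
        by_cases hec : e.1 = c
        · rw [if_pos hec]
          refine le_trans ?_ (hk e)
          have hcl : (((univ : Finset ((Σ a, D a) × (Σ a, D a))).filter
              (fun q => Bad q.1 q.2 ∧ q.1.1 = c)).filter
              (fun q => q.1 = e)).card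
              ≤ ((univ : Finset (Σ a, D a)).filter fun f => Bad e f).card := by
            apply Finset.card_le_card_of_injOn (fun q => q.2)
            · intro q hq
              simp only [Finset.mem_coe, Finset.mem_filter, Finset.mem_univ, true_and] at hq ⊢
              obtain ⟨⟨hb, -⟩, hq1⟩ := hq
              rw [← hq1]; exact hb
            · intro q hq q' hq' hqq
              simp only [Finset.coe_filter, Set.mem_setOf_eq, Finset.mem_univ, true_and] at hq hq'
              exact Prod.ext (hq.2.trans hq'.2.symm) hqq
          exact_mod_cast hcl
        · rw [if_neg hec]
          have hempty : (((univ : Finset ((Σ a, D a) × (Σ a, D a))).filter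
              (fun q => Bad q.1 q.2 ∧ q.1.1 = c)).filter
              (fun q => q.1 = e)) = ∅ := by
            apply Finset.filter_eq_empty_iff.2
            intro q hq
            obtain ⟨-, hc⟩ := (Finset.mem_filter.1 hq).2
            intro h1
            exact hec (h1 ▸ hc)
          rw [hempty]
          simp
      calc (((univ : Finset ((Σ a, D a) × (Σ a, D a))).filter
            fun q => Bad q.1 q.2 ∧ q.1.1 = c).card : ℝ)
          = ∑ e : Σ a, D a, ((((univ : Finset ((Σ a, D a) × (Σ a, D a))).filter
              fun q => Bad q.1 q.2 ∧ q.1.1 = c).filter fun q => q.1 = e).card : ℝ) := by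
            rw [hfw]; push_cast; rfl
        _ ≤ ∑ e : Σ a, D a, (if e.1 = c then k else 0) :=
            Finset.sum_le_sum (fun e _ => hterm e)
        _ = ∑ e ∈ (univ : Finset (Σ a, D a)).filter (fun e => e.1 = c), k := by
            rw [Finset.sum_filter]
        _ = (Fintype.card (D c) : ℝ) * k := by
            rw [Finset.sum_const, card_sigma_fiber, nsmul_eq_mul]
    have cnt_right : ∀ c : ι,
        (((univ : Finset ((Σ a, D a) × (Σ a, D a))).filter
          fun q => Bad q.1 q.2 ∧ q.2.1 = c).card : ℝ)
          ≤ (Fintype.card (D c) : ℝ) * k := by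
      intro c
      have hfw := Finset.card_eq_sum_card_fiberwise
        (f := fun q : (Σ a, D a) × (Σ a, D a) => q.2)
        (s := (univ.filter fun q : (Σ a, D a) × (Σ a, D a) => Bad q.1 q.2 ∧ q.2.1 = c))
        (t := (univ : Finset (Σ a, D a))) (fun q _ => Finset.mem_univ _)
      have hterm : ∀ e : Σ a, D a,
          ((((univ : Finset ((Σ a, D a) × (Σ a, D a))).filter
            fun q => Bad q.1 q.2 ∧ q.2.1 = c).filter
            fun q => q.2 = e).card : ℝ) ≤ if e.1 = c then k else 0 := by
        intro e
        by_cases hec : e.1 = c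
        · rw [if_pos hec]
          refine le_trans ?_ (hk e)
          have hcl : (((univ : Finset ((Σ a, D a) × (Σ a, D a))).filter
              (fun q => Bad q.1 q.2 ∧ q.2.1 = c)).filter
              (fun q => q.2 = e)).card
              ≤ ((univ : Finset (Σ a, D a)).filter fun f => Bad e f).card := by
            apply Finset.card_le_card_of_injOn (fun q => q.1)
            · intro q hq
              simp only [Finset.mem_coe, Finset.mem_filter, Finset.mem_univ, true_and] at hq ⊢
              obtain ⟨⟨hb, -⟩, hq1⟩ := hq
              exact hsymm _ _ (hq1 ▸ hb)
            · intro q hq q' hq' hqq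
              simp only [Finset.coe_filter, Set.mem_setOf_eq, Finset.mem_univ, true_and] at hq hq'
              exact Prod.ext hqq (hq.2.trans hq'.2.symm)
          exact_mod_cast hcl
        · rw [if_neg hec]
          have hempty : (((univ : Finset ((Σ a, D a) × (Σ a, D a))).filter
              (fun q => Bad q.1 q.2 ∧ q.2.1 = c)).filter
              (fun q => q.2 = e)) = ∅ := by
            apply Finset.filter_eq_empty_iff.2
            intro q hq
            obtain ⟨-, hc⟩ := (Finset.mem_filter.1 hq).2
            intro h1
            exact hec (h1 ▸ hc)
          rw [hempty]
          simp
      calc (((univ : Finset ((Σ a, D a) × (Σ a, D a))).filter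
            fun q => Bad q.1 q.2 ∧ q.2.1 = c).card : ℝ)
          = ∑ e : Σ a, D a, ((((univ : Finset ((Σ a, D a) × (Σ a, D a))).filter
              fun q => Bad q.1 q.2 ∧ q.2.1 = c).filter fun q => q.2 = e).card : ℝ) := by
            rw [hfw]; push_cast; rfl
        _ ≤ ∑ e : Σ a, D a, (if e.1 = c then k else 0) :=
            Finset.sum_le_sum (fun e _ => hterm e)
        _ = ∑ e ∈ (univ : Finset (Σ a, D a)).filter (fun e => e.1 = c), k := by
            rw [Finset.sum_filter]
        _ = (Fintype.card (D c) : ℝ) * k := by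
            rw [Finset.sum_const, card_sigma_fiber, nsmul_eq_mul]
    have depbound : ∀ (T : Finset ((Σ a, D a) × (Σ a, D a))), T ⊆ P → ∀ (a b : ι),
        ((T.filter fun q => ¬(q.1.1 ≠ a ∧ q.1.1 ≠ b ∧ q.2.1 ≠ a ∧ q.2.1 ≠ b)).card : ℝ)
          ≤ 2 * ((Fintype.card (D a) : ℝ) + (Fintype.card (D b) : ℝ)) * k := by
      intro T hTP a b
      have hsub : (T.filter fun q => ¬(q.1.1 ≠ a ∧ q.1.1 ≠ b ∧ q.2.1 ≠ a ∧ q.2.1 ≠ b))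
          ⊆ (((univ : Finset ((Σ a, D a) × (Σ a, D a))).filter
              (fun q => Bad q.1 q.2 ∧ q.1.1 = a))
            ∪ ((univ : Finset ((Σ a, D a) × (Σ a, D a))).filter
              (fun q => Bad q.1 q.2 ∧ q.1.1 = b)))
            ∪ (((univ : Finset ((Σ a, D a) × (Σ a, D a))).filter
              (fun q => Bad q.1 q.2 ∧ q.2.1 = a))
            ∪ ((univ : Finset ((Σ a, D a) × (Σ a, D a))).filter
              (fun q => Bad q.1 q.2 ∧ q.2.1 = b))) := by
        intro q hq
        obtain ⟨hqT, hqn⟩ := Finset.mem_filter.1 hq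
        have hB : Bad q.1 q.2 := by
          have := hTP hqT
          rw [hPdef] at this
          exact (Finset.mem_filter.1 this).2.2
        simp only [ne_eq, not_and, not_not, not_forall] at hqn
        simp only [Finset.mem_union, Finset.mem_filter, Finset.mem_univ, true_and]
        by_cases h1 : q.1.1 = a
        · exact Or.inl (Or.inl ⟨hB, h1⟩)
        · by_cases h2 : q.1.1 = b
          · exact Or.inl (Or.inr ⟨hB, h2⟩)
          · by_cases h3 : q.2.1 = a
            · exact Or.inr (Or.inl ⟨hB, h3⟩)
            · exact Or.inr (Or.inr ⟨hB, hqn h1 h2 h3⟩)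
      have hc := Finset.card_le_card hsub
      have hc2 := le_trans hc (le_trans (Finset.card_union_le _ _)
        (add_le_add (Finset.card_union_le _ _) (Finset.card_union_le _ _)))
      have := cnt_left a
      have := cnt_left b
      have := cnt_right a
      have := cnt_right b
      have hcast : ((T.filter fun q =>
          ¬(q.1.1 ≠ a ∧ q.1.1 ≠ b ∧ q.2.1 ≠ a ∧ q.2.1 ≠ b)).card : ℝ)
          ≤ (((univ : Finset ((Σ a, D a) × (Σ a, D a))).filter
              (fun q => Bad q.1 q.2 ∧ q.1.1 = a)).card : ℝ)
            + (((univ : Finset ((Σ a, D a) × (Σ a, D a))).filter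
              (fun q => Bad q.1 q.2 ∧ q.1.1 = b)).card : ℝ)
            + ((((univ : Finset ((Σ a, D a) × (Σ a, D a))).filter
              (fun q => Bad q.1 q.2 ∧ q.2.1 = a)).card : ℝ)
            + (((univ : Finset ((Σ a, D a) × (Σ a, D a))).filter
              (fun q => Bad q.1 q.2 ∧ q.2.1 = b)).card : ℝ)) := by
        exact_mod_cast hc2
      linarith
    -- the main chain induction
    have chain : ∀ (B : ℕ) (S : Finset ((Σ a, D a) × (Σ a, D a))), S.card ≤ B → S ⊆ P →
        ∀ S' ⊆ S, (1 - x) ^ ((S \ S').card) * ((good S').card : ℝ)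
          ≤ ((good S).card : ℝ) := by
      intro B
      induction B with
      | zero =>
        intro S hcard hSP S' hS'
        have hSe : S = ∅ := Finset.card_eq_zero.1 (Nat.le_zero.1 hcard)
        subst hSe
        have hS'e : S' = ∅ := Finset.subset_empty.1 hS'
        subst hS'e
        simp
      | succ B ihB =>
        intro S hcard hSP S' hS'
        rcases eq_or_ne S' S with rfl | hne'
        · simp
        · have hex : ∃ p, p ∈ S ∧ p ∉ S' := by
            by_contra hcon
            push_neg at hcon
            exact hne' (Finset.Subset.antisymm hS' hcon)
          obtain ⟨p, hpS, hpS'⟩ := hex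
          set T := S.erase p with hT
          have hTP : T ⊆ P := (Finset.erase_subset _ _).trans hSP
          have hS'T : S' ⊆ T := fun q hq =>
            Finset.mem_erase.2 ⟨fun h => hpS' (h ▸ hq), hS' hq⟩
          have hTcard : T.card ≤ B := by
            rw [hT, Finset.card_erase_of_mem hpS]
            omega
          have hpP := hSP hpS
          rw [hPdef, Finset.mem_filter] at hpP
          obtain ⟨-, hab, hBad⟩ := hpP
          -- the step: (1-x) * N T ≤ N S
          set T'' := T.filter
            (fun q => q.1.1 ≠ p.1.1 ∧ q.1.1 ≠ p.2.1 ∧ q.2.1 ≠ p.1.1 ∧ q.2.1 ≠ p.2.1) with hT''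
          have hT''T : T'' ⊆ T := Finset.filter_subset _ _
          have htb : ((T \ T'').card : ℝ)
              ≤ 2 * ((Fintype.card (D p.1.1) : ℝ) + (Fintype.card (D p.2.1) : ℝ)) * k := by
            rw [hT'', ← Finset.filter_not]
            exact depbound T hTP p.1.1 p.2.1
          have htx : ((T \ T'').card : ℝ) * x ≤ 1 / 2 := by
            have h1 := hMc p.1.1
            have h2 := hMc p.2.1
            have hM0 : 0 ≤ M := le_trans (le_trans (by norm_num) hm16) hMm
            have hxx : ((T \ T'').card : ℝ) * x ≤ (2 * (M + M) * k) * (2 / m ^ 2) := by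
              apply mul_le_mul (by nlinarith) le_rfl hx0.le (by nlinarith)
            calc ((T \ T'').card : ℝ) * x ≤ (2 * (M + M) * k) * (2 / m ^ 2) := hxx
              _ = 8 * (M * k) / m ^ 2 := by ring
              _ ≤ 1 / 2 := by
                  rw [div_le_iff₀ hm2]
                  nlinarith
          have hhalf : (1 / 2 : ℝ) ≤ (1 - x) ^ (T \ T'').card := by
            have hber := one_add_mul_le_pow (a := -x) (by nlinarith) (T \ T'').card
            have : (1 : ℝ) + ((T \ T'').card : ℝ) * (-x) = 1 - ((T \ T'').card : ℝ) * x := by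
              ring
            rw [this] at hber
            have : (1 : ℝ) + -x = 1 - x := by ring
            rw [this] at hber
            linarith
          have hT''le : ((good T'').card : ℝ) ≤ 2 * ((good T).card : ℝ) := by
            have hch := ihB T hTcard hTP T'' hT''T
            have h0 : (0:ℝ) ≤ ((good T'').card : ℝ) := Nat.cast_nonneg _
            nlinarith
          have hpinT := pin p.1.1 p.2.1 hab p.1.2 p.2.2 T''
            (fun q hq => (Finset.mem_filter.1 hq).2)
          have hsubbad : ((good T).filter fun σ => σ p.1.1 = p.1.2 ∧ σ p.2.1 = p.2.2)
              ⊆ ((good T'').filter fun σ => σ p.1.1 = p.1.2 ∧ σ p.2.1 = p.2.2) :=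
            Finset.filter_subset_filter _ (good_anti hT''T)
          have hDaDb : m ^ 2 ≤ (Fintype.card (D p.1.1) : ℝ) * (Fintype.card (D p.2.1) : ℝ) := by
            have h1 := hm p.1.1
            have h2 := hm p.2.1
            nlinarith
          have hbad : ((((good T).filter
              fun σ => σ p.1.1 = p.1.2 ∧ σ p.2.1 = p.2.2).card : ℝ))
              ≤ x * ((good T).card : ℝ) := by
            have hb1 : ((((good T).filter
                fun σ => σ p.1.1 = p.1.2 ∧ σ p.2.1 = p.2.2).card : ℝ))
                ≤ ((((good T'').filter
                fun σ => σ p.1.1 = p.1.2 ∧ σ p.2.1 = p.2.2).card : ℝ)) := by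
              exact_mod_cast Finset.card_le_card hsubbad
            have hb2 : ((((good T'').filter
                fun σ => σ p.1.1 = p.1.2 ∧ σ p.2.1 = p.2.2).card : ℝ))
                * ((Fintype.card (D p.1.1) : ℝ) * (Fintype.card (D p.2.1) : ℝ))
                = ((good T'').card : ℝ) := by
              exact_mod_cast congrArg (Nat.cast : ℕ → ℝ) hpinT
            have hBge : (0:ℝ) ≤ ((((good T'').filter
                fun σ => σ p.1.1 = p.1.2 ∧ σ p.2.1 = p.2.2).card : ℝ)) := Nat.cast_nonneg _
            have hkey : ((((good T).filter
                fun σ => σ p.1.1 = p.1.2 ∧ σ p.2.1 = p.2.2).card : ℝ)) * m ^ 2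
                ≤ 2 * ((good T).card : ℝ) := by
              calc ((((good T).filter
                  fun σ => σ p.1.1 = p.1.2 ∧ σ p.2.1 = p.2.2).card : ℝ)) * m ^ 2
                  ≤ ((((good T'').filter
                    fun σ => σ p.1.1 = p.1.2 ∧ σ p.2.1 = p.2.2).card : ℝ))
                    * ((Fintype.card (D p.1.1) : ℝ) * (Fintype.card (D p.2.1) : ℝ)) := by
                    apply mul_le_mul hb1 hDaDb hm2.le hBge
                _ = ((good T'').card : ℝ) := hb2
                _ ≤ 2 * ((good T).card : ℝ) := hT''le
            rw [hxdef]
            rw [div_mul_eq_mul_div, le_div_iff₀ hm2]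
            linarith
          have hins : S = insert p T := (Finset.insert_erase hpS).symm
          have hgi : good (D := D) S
              = (good T).filter (fun σ => ¬(σ p.1.1 = p.1.2 ∧ σ p.2.1 = p.2.2)) := by
            rw [hins]
            ext σ
            constructor
            · intro h
              rw [mem_good] at h
              refine Finset.mem_filter.2 ⟨mem_good.2 fun q hq => h q (Finset.mem_insert_of_mem hq),
                h p (Finset.mem_insert_self _ _)⟩
            · intro h
              obtain ⟨hg, hnp⟩ := Finset.mem_filter.1 h
              rw [mem_good] at hg ⊢
              intro q hq
              rcases Finset.mem_insert.1 hq with rfl | hq'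
              · exact hnp
              · exact hg q hq'
          have hsplit : ((good T).filter
              (fun σ => σ p.1.1 = p.1.2 ∧ σ p.2.1 = p.2.2)).card
              + (good (D := D) S).card = (good T).card := by
            rw [hgi]
            exact Finset.card_filter_add_card_filter_not _
          have hstep : (1 - x) * ((good T).card : ℝ) ≤ ((good S).card : ℝ) := by
            have hsplit' : ((((good T).filter
                (fun σ => σ p.1.1 = p.1.2 ∧ σ p.2.1 = p.2.2)).card : ℝ)
                + ((good (D := D) S).card : ℝ)) = ((good T).card : ℝ) := by
              exact_mod_cast congrArg (Nat.cast : ℕ → ℝ) hsplit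
            nlinarith [Nat.cast_nonneg (α := ℝ) (good (D := D) T).card]
          have hcard1 : (S \ S').card = (T \ S').card + 1 := by
            have hTe : T \ S' = (S \ S').erase p := by
              ext q
              simp only [hT, Finset.mem_sdiff, Finset.mem_erase]
              tauto
            have hpSd : p ∈ S \ S' := Finset.mem_sdiff.2 ⟨hpS, hpS'⟩
            have hpos := Finset.card_pos.2 ⟨p, hpSd⟩
            have hce : (T \ S').card = ((S \ S').erase p).card := congrArg Finset.card hTe
            have hce2 := Finset.card_erase_of_mem hpSd
            rw [hce, hce2]
            exact (Nat.succ_pred_eq_of_pos hpos).symm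
          calc (1 - x) ^ (S \ S').card * ((good S').card : ℝ)
              = (1 - x) * ((1 - x) ^ (T \ S').card * ((good S').card : ℝ)) := by
                rw [hcard1, pow_succ]; ring
            _ ≤ (1 - x) * ((good T).card : ℝ) :=
                mul_le_mul_of_nonneg_left (ihB T hTcard hTP S' hS'T) h1x.le
            _ ≤ ((good S).card : ℝ) := hstep
    -- conclusion
    have hchain := chain P.card P le_rfl Finset.Subset.rfl ∅ (Finset.empty_subset _)
    rw [Finset.sdiff_empty] at hchain
    have hgoodempty : good (D := D) (∅ : Finset ((Σ a, D a) × (Σ a, D a))) = univ := by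
      simp [good]
    rw [hgoodempty] at hchain
    have hnePi : Nonempty (∀ a, D a) := ⟨fun a => (hne a).some⟩
    have hOpos : 0 < (((univ : Finset (∀ a, D a)).card : ℕ) : ℝ) := by
      rw [Finset.card_univ]
      exact_mod_cast Fintype.card_pos
    have hgpos : 0 < ((good (D := D) P).card : ℝ) :=
      lt_of_lt_of_le (mul_pos (pow_pos h1x _) hOpos) hchain
    have hgpos' : 0 < (good (D := D) P).card := by exact_mod_cast hgpos
    obtain ⟨σ, hσ⟩ := Finset.card_pos.1 hgpos'
    refine ⟨σ, fun a a' haa hB => ?_⟩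
    have hmem : ((⟨a, σ a⟩ : Σ a, D a), (⟨a', σ a'⟩ : Σ a, D a)) ∈ P := by
      rw [hPdef]
      exact Finset.mem_filter.2 ⟨Finset.mem_univ _, haa, hB⟩
    exact mem_good.1 hσ _ hmem ⟨rfl, rfl⟩

end LLLsec

/-- Corollary `cor:manyswitch`.
Let `1/n ≪ μ ≪ ε ≪ d` and `μ ≪ 1/r`. Given disjoint sets `V₁,…,V_r` of sizes
between `n/(2r)` and `2n/r` (totalling `n` vertices) and disjoint sets `X₁,…,X_r`
with `|X_i| ≤ εn/r`, a bipartite graph between `X = ∪X_i` and `V = ∪V_i` whose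
edges join `X_i` to `V_i` and whose `X`-side degrees are at least `dn/r`,
and any `μn`-bounded system of conflicts, there is a conflict-free matching
covering `X`. -/
theorem stmt7 :
    ∀ d : ℝ, 0 < d → d ≤ 1 →
    ∃ ε₀ > (0 : ℝ), ∀ ε : ℝ, 0 < ε → ε ≤ ε₀ →
    ∀ r : ℕ, 1 ≤ r →
    ∃ μ₀ > (0 : ℝ), ∀ μ : ℝ, 0 < μ → μ ≤ μ₀ →
    ∃ n₀ : ℕ, ∀ n : ℕ, n₀ ≤ n →
    ∀ (α β : Type) [Fintype α] [Fintype β] [DecidableEq α] [DecidableEq β]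
      (iX : α → Fin r) (iV : β → Fin r)
      (adj : α → β → Prop) [∀ a b, Decidable (adj a b)]
      (F : α × β → α × β → Prop) [∀ e f, Decidable (F e f)],
    -- V = ∪ V_i has n vertices, with n/(2r) ≤ |V_i| ≤ 2n/r
    Fintype.card β = n →
    (∀ i : Fin r, (n : ℝ) / (2 * r) ≤ ((Finset.univ.filter fun b => iV b = i).card : ℝ) ∧
      ((Finset.univ.filter fun b => iV b = i).card : ℝ) ≤ 2 * n / r) →
    -- |X_i| ≤ εn/r
    (∀ i : Fin r, ((Finset.univ.filter fun a => iX a = i).card : ℝ) ≤ ε * n / r) →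
    -- every edge joins X_i and V_i for some i
    (∀ a b, adj a b → iX a = iV b) →
    -- d_G(x) ≥ dn/r for all x ∈ X
    (∀ a : α, d * n / r ≤ ((Finset.univ.filter fun b => adj a b).card : ℝ)) →
    -- F is a (symmetric) system of conflicts on the edges, μn-bounded
    (∀ e f, F e f → F f e) →
    (∀ a b, adj a b →
      (((Finset.univ : Finset (α × β)).filter fun e => adj e.1 e.2 ∧ F (a, b) e).card : ℝ) ≤ μ * n) →
    -- conclusion: a conflict-free matching covering X
    ∃ m : α → β, Function.Injective m ∧ (∀ a, adj a (m a)) ∧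
      ∀ a a' : α, a ≠ a' → ¬ F (a, m a) (a', m a') := by
  intro d hd0 hd1
  refine ⟨d ^ 2 / 64, by positivity, ?_⟩
  intro ε hε0 hεle r hr
  have hr0 : (0 : ℝ) < r := by exact_mod_cast hr
  refine ⟨d ^ 2 / (64 * r), by positivity, ?_⟩
  intro μ hμ0 hμle
  refine ⟨1, ?_⟩
  intro n hn α β _ _ _ _ iX iV adj _ F _ hcard hV hX hedge hdeg hFsym hFbd
  have hn0 : (0 : ℝ) < n := by exact_mod_cast hn
  -- degree bound for the conflict relation on the sigma type
  have hk : ∀ e : Σ a : α, {b : β // adj a b},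
      (((univ : Finset (Σ a : α, {b : β // adj a b})).filter
        fun f => F (e.1, e.2.1) (f.1, f.2.1) ∨ e.2.1 = f.2.1).card : ℝ) ≤ μ * n + ε * n / r := by
    intro e
    have hsplit : ((univ : Finset (Σ a : α, {b : β // adj a b})).filter
        fun f => F (e.1, e.2.1) (f.1, f.2.1) ∨ e.2.1 = f.2.1)
        = ((univ : Finset (Σ a : α, {b : β // adj a b})).filter
            fun f => F (e.1, e.2.1) (f.1, f.2.1))
          ∪ ((univ : Finset (Σ a : α, {b : β // adj a b})).filter
            fun f => e.2.1 = f.2.1) := Finset.filter_or _ _ _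
    have hcu : ((univ : Finset (Σ a : α, {b : β // adj a b})).filter
        fun f => F (e.1, e.2.1) (f.1, f.2.1) ∨ e.2.1 = f.2.1).card
        ≤ ((univ : Finset (Σ a : α, {b : β // adj a b})).filter
            fun f => F (e.1, e.2.1) (f.1, f.2.1)).card
          + ((univ : Finset (Σ a : α, {b : β // adj a b})).filter
            fun f => e.2.1 = f.2.1).card := by
      rw [hsplit]; exact Finset.card_union_le _ _
    have h1 : (((univ : Finset (Σ a : α, {b : β // adj a b})).filter
        fun f => F (e.1, e.2.1) (f.1, f.2.1)).card : ℝ) ≤ μ * n := by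
      refine le_trans ?_ (hFbd e.1 e.2.1 e.2.2)
      have hinj : ((univ : Finset (Σ a : α, {b : β // adj a b})).filter
          fun f => F (e.1, e.2.1) (f.1, f.2.1)).card
          ≤ ((Finset.univ : Finset (α × β)).filter
            fun e' => adj e'.1 e'.2 ∧ F (e.1, e.2.1) e').card := by
        apply Finset.card_le_card_of_injOn (fun f => (f.1, f.2.1))
        · intro f hf
          simp only [Finset.mem_coe, Finset.mem_filter, Finset.mem_univ, true_and] at hf ⊢
          exact ⟨f.2.2, hf⟩
        · intro f hf g hg hfg
          have h1' : f.1 = g.1 := congrArg Prod.fst hfg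
          have h2' : f.2.1 = g.2.1 := congrArg Prod.snd hfg
          rcases f with ⟨fa, fb⟩
          rcases g with ⟨ga, gb⟩
          cases h1'
          exact congrArg (Sigma.mk fa) (Subtype.ext h2')
      exact_mod_cast hinj
    have h2 : (((univ : Finset (Σ a : α, {b : β // adj a b})).filter
        fun f => e.2.1 = f.2.1).card : ℝ) ≤ ε * n / r := by
      refine le_trans ?_ (hX (iX e.1))
      have hinj : ((univ : Finset (Σ a : α, {b : β // adj a b})).filter
          fun f => e.2.1 = f.2.1).card
          ≤ (Finset.univ.filter fun a => iX a = iX e.1).card := by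
        apply Finset.card_le_card_of_injOn (fun f => f.1)
        · intro f hf
          simp only [Finset.mem_coe, Finset.mem_filter, Finset.mem_univ, true_and] at hf ⊢
          have hfa : iX f.1 = iV f.2.1 := hedge _ _ f.2.2
          have hea : iX e.1 = iV e.2.1 := hedge _ _ e.2.2
          rw [hfa, ← hf, ← hea]
        · intro f hf g hg hfg
          simp only [Finset.coe_filter, Set.mem_setOf_eq, Finset.mem_univ, true_and] at hf hg
          rcases f with ⟨fa, fb⟩
          rcases g with ⟨ga, gb⟩
          cases hfg
          exact congrArg (Sigma.mk fa) (Subtype.ext (hf.symm.trans hg))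
      exact_mod_cast hinj
    calc (((univ : Finset (Σ a : α, {b : β // adj a b})).filter
        fun f => F (e.1, e.2.1) (f.1, f.2.1) ∨ e.2.1 = f.2.1).card : ℝ)
        ≤ (((univ : Finset (Σ a : α, {b : β // adj a b})).filter
            fun f => F (e.1, e.2.1) (f.1, f.2.1)).card : ℝ)
          + (((univ : Finset (Σ a : α, {b : β // adj a b})).filter
            fun f => e.2.1 = f.2.1).card : ℝ) := by exact_mod_cast hcu
      _ ≤ μ * n + ε * n / r := add_le_add h1 h2
  have hm : ∀ a : α, d * n / r ≤ (Fintype.card {b : β // adj a b} : ℝ) := by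
    intro a
    rw [Fintype.card_subtype]
    exact hdeg a
  have hMb : ∀ a : α, (Fintype.card {b : β // adj a b} : ℝ) ≤ 2 * n / r := by
    intro a
    rw [Fintype.card_subtype]
    refine le_trans ?_ (hV (iX a)).2
    have hss : (Finset.univ.filter fun b => adj a b)
        ⊆ (Finset.univ.filter fun b => iV b = iX a) := by
      intro b hb
      exact Finset.mem_filter.2 ⟨Finset.mem_univ _,
        ((hedge a b (Finset.mem_filter.1 hb).2)).symm⟩
    exact_mod_cast Finset.card_le_card hss
  have hmk : 16 * (2 * n / r) * (μ * n + ε * n / r) ≤ (d * n / r) ^ 2 := by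
    have hμr : μ * r ≤ d ^ 2 / 64 := by
      have h := mul_le_mul_of_nonneg_right hμle hr0.le
      calc μ * r ≤ d ^ 2 / (64 * r) * r := h
        _ = d ^ 2 / 64 := by
            field_simp
    have hkey : 32 * (μ * r) + 32 * ε ≤ d ^ 2 := by linarith
    have hfrac : (0:ℝ) ≤ (n : ℝ) ^ 2 / (r : ℝ) ^ 2 := by positivity
    calc 16 * (2 * n / r) * (μ * n + ε * n / r)
        = (32 * (μ * r) + 32 * ε) * ((n : ℝ) ^ 2 / (r : ℝ) ^ 2) := by
          field_simp
          ring
      _ ≤ d ^ 2 * ((n : ℝ) ^ 2 / (r : ℝ) ^ 2) := mul_le_mul_of_nonneg_right hkey hfrac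
      _ = (d * n / r) ^ 2 := by
          field_simp
  obtain ⟨σ, hσ⟩ := LLL (D := fun a : α => {b : β // adj a b})
    (fun e f => F (e.1, e.2.1) (f.1, f.2.1) ∨ e.2.1 = f.2.1)
    (fun e f h => h.imp (hFsym _ _) Eq.symm)
    (d * n / r) (2 * n / r) (μ * n + ε * n / r)
    hm hMb hk hmk (div_pos (mul_pos hd0 hn0) hr0)
  refine ⟨fun a => (σ a).1, ?_, fun a => (σ a).2, ?_⟩
  · intro a a' h
    by_contra hne
    exact hσ a a' hne (Or.inr h)
  · intro a a' hne hF
    exact hσ a a' hne (Or.inl hF)
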